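/- Let G = (V, E) be a finite simple graph on n vertices. Suppose L' ⊆ V is a nonempty set of size l' such that every vertex w ∈ L' satisfies |Γ(w) ∩ L'| ≥ |Γ(w) ∩ (V \ L')|, and suppose the vertices of V \ L' can be ordered u₁, ..., u_{n-l'} such that each u_i has strictly more neighbors in L' ∪ {u_j : j < i} than in the complement of that set. Then n - l' ≤ l'(l' - 1), and consequently l' ≥ √n. -/
import Mathlib


open Finset

/-- The edge boundary count of a set: sum over vertices in `S` of neighbors outside `S`. -/
def stmt5Bnd {V : Type*} [Fintype V] [DecidableEq V] (G : SimpleGraph V)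
    [DecidableRel G.Adj] (S : Finset V) : ℕ :=
  ∑ v ∈ S, (G.neighborFinset v ∩ Sᶜ).card

lemma stmt5Bnd_insert {V : Type*} [Fintype V] [DecidableEq V] (G : SimpleGraph V)
    [DecidableRel G.Adj] (S : Finset V) (x : V) (hx : x ∉ S) :
    stmt5Bnd G (insert x S) + (G.neighborFinset x ∩ S).card =
      stmt5Bnd G S + (G.neighborFinset x ∩ Sᶜ).card := by
  classical
  have hcompl : (insert x S)ᶜ = Sᶜ.erase x := by
    ext v; simp [Finset.mem_erase, and_comm, not_or]
  have hx_self : G.neighborFinset x ∩ (insert x S)ᶜ = G.neighborFinset x ∩ Sᶜ := by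
    rw [hcompl]
    ext v
    simp only [mem_inter, mem_erase, SimpleGraph.mem_neighborFinset]
    constructor
    · rintro ⟨h, _, h2⟩; exact ⟨h, h2⟩
    · rintro ⟨h, h2⟩; exact ⟨h, fun hv => G.irrefl (hv ▸ h), h2⟩
  have key : ∀ v ∈ S, (G.neighborFinset v ∩ Sᶜ).card =
      (G.neighborFinset v ∩ (insert x S)ᶜ).card + (if v ∈ G.neighborFinset x then 1 else 0) := by
    intro v hv
    rw [hcompl]
    have : G.neighborFinset v ∩ Sᶜ.erase x = (G.neighborFinset v ∩ Sᶜ).erase x := by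
      ext w; simp [mem_erase, and_comm, and_left_comm, and_assoc]
    rw [this]
    by_cases hvx : v ∈ G.neighborFinset x
    · have hadj : G.Adj v x := ((SimpleGraph.mem_neighborFinset _ _ _).mp hvx).symm
      have hxmem : x ∈ G.neighborFinset v ∩ Sᶜ := by
        simp [SimpleGraph.mem_neighborFinset, hadj, hx]
      rw [Finset.card_erase_of_mem hxmem, if_pos hvx]
      have := Finset.card_pos.mpr ⟨x, hxmem⟩
      omega
    · have hxmem : x ∉ G.neighborFinset v ∩ Sᶜ := by
        simp only [mem_inter, SimpleGraph.mem_neighborFinset, not_and]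
        intro hadj
        exact absurd (by rw [SimpleGraph.mem_neighborFinset]; exact hadj.symm) hvx
      rw [Finset.erase_eq_of_notMem hxmem, if_neg hvx]
      omega
  have hsum : ∑ v ∈ S, (G.neighborFinset v ∩ Sᶜ).card =
      ∑ v ∈ S, (G.neighborFinset v ∩ (insert x S)ᶜ).card +
        ∑ v ∈ S, (if v ∈ G.neighborFinset x then 1 else 0) := by
    rw [← Finset.sum_add_distrib]
    exact Finset.sum_congr rfl key
  have hite : ∑ v ∈ S, (if v ∈ G.neighborFinset x then 1 else 0) =
      (G.neighborFinset x ∩ S).card := by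
    rw [Finset.sum_ite_mem]
    simp [Finset.inter_comm]
  unfold stmt5Bnd
  rw [Finset.sum_insert hx, hx_self, hsum, hite]
  ring

/-- If `L'` is a nonempty set of `l'` vertices each having at least as many neighbors
inside `L'` as outside, and the remaining `n - l'` vertices can be ordered
`u₁, …, u_{n-l'}` so that each `uᵢ` has strictly more neighbors in
`L' ∪ {u_j : j < i}` than outside it, then `n - l' ≤ l'(l' - 1)` and `l' ≥ √n`. -/
theorem stmt_5 {V : Type*} [Fintype V] [DecidableEq V] (G : SimpleGraph V)
    [DecidableRel G.Adj] (n : ℕ) (hn : Fintype.card V = n)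
    (L' : Finset V) (hne : L'.Nonempty) (l' : ℕ) (hl' : L'.card = l')
    (hin : ∀ w ∈ L', (G.neighborFinset w ∩ L'ᶜ).card ≤ (G.neighborFinset w ∩ L').card)
    (u : Fin (n - l') → V) (hu_inj : Function.Injective u)
    (hu_range : ∀ v : V, v ∉ L' ↔ ∃ i, u i = v)
    (hu : ∀ i : Fin (n - l'),
      (G.neighborFinset (u i) ∩ (L' ∪ (univ.filter (fun j => j < i)).image u)ᶜ).card <
      (G.neighborFinset (u i) ∩ (L' ∪ (univ.filter (fun j => j < i)).image u)).card) :
    n - l' ≤ l' * (l' - 1) ∧ Real.sqrt n ≤ l' := by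
  classical
  set T : ℕ → Finset V := fun k => L' ∪ (univ.filter (fun j : Fin (n - l') => (j : ℕ) < k)).image u
    with hT
  -- base bound
  have hbase : stmt5Bnd G L' ≤ l' * (l' - 1) := by
    unfold stmt5Bnd
    calc ∑ v ∈ L', (G.neighborFinset v ∩ L'ᶜ).card
        ≤ ∑ v ∈ L', (G.neighborFinset v ∩ L').card := Finset.sum_le_sum hin
      _ ≤ ∑ v ∈ L', (l' - 1) := by
          apply Finset.sum_le_sum
          intro v hv
          have hsub : G.neighborFinset v ∩ L' ⊆ L'.erase v := by
            intro w hw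
            simp only [mem_inter, SimpleGraph.mem_neighborFinset] at hw
            exact Finset.mem_erase.mpr ⟨fun h => G.irrefl (h ▸ hw.1), hw.2⟩
          calc (G.neighborFinset v ∩ L').card ≤ (L'.erase v).card := Finset.card_le_card hsub
            _ = l' - 1 := by rw [Finset.card_erase_of_mem hv, hl']
      _ = l' * (l' - 1) := by rw [Finset.sum_const, hl', smul_eq_mul]
  -- inductive step
  have hstep : ∀ k : ℕ, k ≤ n - l' → stmt5Bnd G (T k) + k ≤ l' * (l' - 1) := by
    intro k
    induction k with
    | zero =>
      intro _
      have : T 0 = L' := by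
        simp [hT]
      rw [this]
      simpa using hbase
    | succ k ih =>
      intro hk
      have hk' : k < n - l' := hk
      set i : Fin (n - l') := ⟨k, hk'⟩ with hi
      have hfilter : (univ.filter (fun j : Fin (n - l') => (j : ℕ) < k + 1)) =
          insert i (univ.filter (fun j : Fin (n - l') => (j : ℕ) < k)) := by
        ext j
        simp only [mem_filter, mem_insert, mem_univ, true_and]
        constructor
        · intro hj
          rcases Nat.lt_succ_iff_lt_or_eq.mp hj with h | h
          · exact Or.inr h
          · exact Or.inl (Fin.ext h)
        · rintro (rfl | h)
          · exact Nat.lt_succ_self k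
          · exact Nat.lt_succ_of_lt h
      have hTsucc : T (k + 1) = insert (u i) (T k) := by
        simp only [hT, hfilter, Finset.image_insert]
        ext v; simp [or_comm, or_left_comm, or_assoc]
      have hui_not : u i ∉ T k := by
        simp only [hT, Finset.mem_union, not_or]
        constructor
        · rw [hu_range]; exact ⟨i, rfl⟩
        · intro hmem
          obtain ⟨j, hj, hje⟩ := Finset.mem_image.mp hmem
          have := hu_inj hje
          rw [this] at hj
          simp only [mem_filter] at hj
          simp [hi] at hj
      have hTk_eq : L' ∪ (univ.filter (fun j => j < i)).image u = T k := by
        have hfe : (univ.filter (fun j : Fin (n - l') => j < i)) =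
            univ.filter (fun j : Fin (n - l') => (j : ℕ) < k) := by
          ext j; simp [Fin.lt_def, hi]
        simp only [hT, hfe]
      have hdec := hu i
      rw [hTk_eq] at hdec
      have hins := stmt5Bnd_insert G (T k) (u i) hui_not
      rw [← hTsucc] at hins
      have : stmt5Bnd G (T (k + 1)) < stmt5Bnd G (T k) := by omega
      have ihk := ih (le_of_lt hk')
      omega
  have hfinal := hstep (n - l') le_rfl
  have h1 : n - l' ≤ l' * (l' - 1) := by omega
  -- l' ≤ n and l' ≥ 1
  have hl'pos : 1 ≤ l' := by
    rw [← hl']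
    exact Finset.card_pos.mpr hne
  have hl'n : l' ≤ n := by
    rw [← hl', ← hn]
    exact Finset.card_le_univ L'
  have hn_le : n ≤ l' * l' := by
    obtain ⟨m, rfl⟩ : ∃ m, l' = m + 1 := ⟨l' - 1, by omega⟩
    have : (m + 1) * ((m + 1) - 1) + (m + 1) = (m + 1) * (m + 1) := by
      simp only [Nat.add_sub_cancel]; ring
    omega
  refine ⟨h1, ?_⟩
  have : Real.sqrt n ≤ Real.sqrt ((l' : ℝ) * l') := by
    apply Real.sqrt_le_sqrt
    exact_mod_cast hn_le
  calc Real.sqrt n ≤ Real.sqrt ((l' : ℝ) * l') := this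
    _ = l' := Real.sqrt_mul_self (by positivity)
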